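/- arXiv:1806.09292 — 8 statements merged into one kernel-verified Lean document; each statement's English description precedes it below -/
import Mathlib

section
/- For every t in the interval [0, 1/2], the inequality 3/2 ≤ h(t) + 2t·h'(t) holds, where h(s) = 2/√(1−s) − 1/(1−s+√(1−s)); moreover the function s ↦ h(s) + 2s·h'(s) is monotonically increasing on [0, 1/2]. -/
open Real Set

/-- Algebraic identity: with r = √(1-t), the quantity h t + 2t h'(t) equals F(r). -/
lemma alg_identity (r t : ℝ) (hr : 0 < r) (ht : r ^ 2 = 1 - t) :
    2 / r - 1 / (1 - t + r) +
      2 * t * ((0 * r - 2 * (-(1 / (2 * r)))) / r ^ 2 -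
        (0 * (1 - t + r) - 1 * (-1 + -(1 / (2 * r)))) / (1 - t + r) ^ 2) =
    1 / (1 + r) ^ 2 + 2 / (r ^ 2 * (1 + r)) + 1 / (r ^ 2 * r * (1 + r) ^ 2) := by
  have htt : t = 1 - r ^ 2 := by linarith
  subst htt
  have h1 : (0:ℝ) < 1 + r := by linarith
  have h2 : 1 - (1 - r ^ 2) + r = r * (1 + r) := by ring
  rw [h2]
  field_simp
  ring

/-- F is antitone. -/
lemma F_anti (r1 r2 : ℝ) (h2 : 0 < r2) (h12 : r2 ≤ r1) :
    1 / (1 + r1) ^ 2 + 2 / (r1 ^ 2 * (1 + r1)) + 1 / (r1 ^ 2 * r1 * (1 + r1) ^ 2) ≤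
    1 / (1 + r2) ^ 2 + 2 / (r2 ^ 2 * (1 + r2)) + 1 / (r2 ^ 2 * r2 * (1 + r2) ^ 2) := by
  have h1 : 0 < r1 := lt_of_lt_of_le h2 h12
  gcongr

lemma deriv_val (h : ℝ → ℝ)
    (hh : ∀ s : ℝ, h s = 2 / Real.sqrt (1 - s) - 1 / (1 - s + Real.sqrt (1 - s)))
    (t : ℝ) (ht : t ∈ Set.Icc (0 : ℝ) (1 / 2)) :
    h t + 2 * t * deriv h t =
      1 / (1 + Real.sqrt (1 - t)) ^ 2 + 2 / (Real.sqrt (1 - t) ^ 2 * (1 + Real.sqrt (1 - t))) +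
        1 / (Real.sqrt (1 - t) ^ 2 * Real.sqrt (1 - t) * (1 + Real.sqrt (1 - t)) ^ 2) := by
  obtain ⟨ht0, ht1⟩ := ht
  have h1t : (0:ℝ) < 1 - t := by linarith
  set r := Real.sqrt (1 - t) with hrdef
  have hr0 : 0 < r := Real.sqrt_pos.2 h1t
  have hr2 : r ^ 2 = 1 - t := Real.sq_sqrt h1t.le
  have hv : 0 < 1 - t + r := by linarith
  have hfun : h = fun s => 2 / Real.sqrt (1 - s) - 1 / (1 - s + Real.sqrt (1 - s)) :=
    funext hh
  have hg : HasDerivAt (fun s : ℝ => 1 - s) (-1) t := by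
    simpa using (hasDerivAt_id t).const_sub 1
  have hd1 : HasDerivAt (fun s : ℝ => Real.sqrt (1 - s)) (-(1 / (2 * r))) t := by
    have := (Real.hasDerivAt_sqrt h1t.ne').comp t hg
    exact this.congr_deriv (by rw [hrdef]; ring)
  have hd2 : HasDerivAt (fun s : ℝ => 2 / Real.sqrt (1 - s))
      ((0 * r - 2 * (-(1 / (2 * r)))) / r ^ 2) t :=
    (hasDerivAt_const t 2).div hd1 hr0.ne'
  have hd3 : HasDerivAt (fun s : ℝ => 1 - s + Real.sqrt (1 - s)) (-1 + -(1 / (2 * r))) t :=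
    hg.add hd1
  have hd4 : HasDerivAt (fun s : ℝ => 1 / (1 - s + Real.sqrt (1 - s)))
      ((0 * (1 - t + r) - 1 * (-1 + -(1 / (2 * r)))) / (1 - t + r) ^ 2) t :=
    (hasDerivAt_const t 1).div hd3 hv.ne'
  have hD : deriv h t = (0 * r - 2 * (-(1 / (2 * r)))) / r ^ 2 -
      (0 * (1 - t + r) - 1 * (-1 + -(1 / (2 * r)))) / (1 - t + r) ^ 2 := by
    rw [hfun]
    exact (hd2.sub hd4).deriv
  rw [hh t, hD]
  exact alg_identity r t hr0 hr2

theorem h_plus_two_t_h_deriv_bound (h : ℝ → ℝ)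
    (hh : ∀ s : ℝ, h s = 2 / Real.sqrt (1 - s) - 1 / (1 - s + Real.sqrt (1 - s))) :
    (∀ t ∈ Set.Icc (0 : ℝ) (1 / 2), (3 : ℝ) / 2 ≤ h t + 2 * t * deriv h t) ∧
    MonotoneOn (fun s => h s + 2 * s * deriv h s) (Set.Icc (0 : ℝ) (1 / 2)) := by
  constructor
  · intro t ht
    rw [deriv_val h hh t ht]
    have h1t : (0:ℝ) < 1 - t := by
      have := ht.2; linarith
    have hr0 : 0 < Real.sqrt (1 - t) := Real.sqrt_pos.2 h1t
    have hr1 : Real.sqrt (1 - t) ≤ 1 :=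
      Real.sqrt_le_one.mpr (by have := ht.1; linarith)
    refine le_trans (le_of_eq ?_) (F_anti 1 (Real.sqrt (1 - t)) hr0 hr1)
    norm_num
  · intro s1 hs1 s2 hs2 hle
    simp only
    rw [deriv_val h hh s1 hs1, deriv_val h hh s2 hs2]
    have h1 : (0:ℝ) < 1 - s2 := by have := hs2.2; linarith
    have hr2 : 0 < Real.sqrt (1 - s2) := Real.sqrt_pos.2 h1
    have hle' : Real.sqrt (1 - s2) ≤ Real.sqrt (1 - s1) :=
      Real.sqrt_le_sqrt (by linarith)
    exact F_anti (Real.sqrt (1 - s1)) (Real.sqrt (1 - s2)) hr2 hle'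
end

section
/- For all real η > 0, one has 0 ≤ −∫_{√η}^{∞} sin(η − t²) dt ≤ 1/√η, where the improper integral is understood as an (conditionally convergent) improper Riemann integral. -/
open Real Filter MeasureTheory Set intervalIntegral

theorem improper_sin_tail_bound (η : ℝ) (hη : 0 < η) :
    ∃ I : ℝ,
      Filter.Tendsto (fun R : ℝ => ∫ t in Real.sqrt η..R, Real.sin (η - t ^ 2))
        Filter.atTop (nhds I) ∧
      0 ≤ -I ∧ -I ≤ 1 / Real.sqrt η := by
  set a := Real.sqrt η with ha_def
  have ha : 0 < a := Real.sqrt_pos.mpr hη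
  have ha2 : a ^ 2 = η := Real.sq_sqrt hη.le
  set g : ℝ → ℝ := fun t => Real.cos (η - t ^ 2) / (2 * t) with hg_def
  set h : ℝ → ℝ := fun t => Real.cos (η - t ^ 2) / (2 * t ^ 2) with hh_def
  -- derivative of g
  have hg_deriv : ∀ t : ℝ, t ≠ 0 →
      HasDerivAt g (Real.sin (η - t ^ 2) - h t) t := by
    intro t ht
    have h1 : HasDerivAt (fun t : ℝ => η - t ^ 2) (-(2 * t)) t := by
      simpa using ((hasDerivAt_pow 2 t).const_sub η)
    have h2 : HasDerivAt (fun t : ℝ => Real.cos (η - t ^ 2))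
        (-Real.sin (η - t ^ 2) * (-(2 * t))) t := h1.cos
    have h3 : HasDerivAt (fun t : ℝ => (2 : ℝ) * t) 2 t := by
      simpa using (hasDerivAt_id t).const_mul (2 : ℝ)
    have h4 := h2.div h3 (by simpa using ht)
    convert h4 using 1
    rotate_right
    show Real.sin (η - t ^ 2) - Real.cos (η - t ^ 2) / (2 * t ^ 2) = _
    field_simp [hh_def]
    all_goals rfl
  -- bound function integrable on Ioi a
  have hbound_int : IntegrableOn (fun t : ℝ => 1 / (2 * t ^ 2)) (Ioi a) := by
    have : IntegrableOn (fun t : ℝ => t ^ (-2 : ℝ)) (Ioi a) :=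
      integrableOn_Ioi_rpow_of_lt (by norm_num) ha
    have h2 : IntegrableOn (fun t : ℝ => 1/2 * t ^ (-2 : ℝ)) (Ioi a) := this.const_mul _
    apply h2.congr_fun ?_ measurableSet_Ioi
    intro t ht
    have ht0 : 0 < t := ha.trans ht
    simp only
    rw [Real.rpow_neg ht0.le, Real.rpow_two]
    field_simp
  -- h integrable on Ioi a
  have hh_cont : ContinuousOn h (Ioi a) := by
    apply ContinuousOn.div
    · exact (Real.continuous_cos.comp (continuous_const.sub (continuous_pow 2))).continuousOn
    · exact (continuous_const.mul (continuous_pow 2)).continuousOn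
    · intro t ht
      have : 0 < t := ha.trans ht
      positivity
  have hh_int : IntegrableOn h (Ioi a) := by
    apply Integrable.mono' hbound_int
    · exact (hh_cont.aestronglyMeasurable measurableSet_Ioi)
    · filter_upwards [ae_restrict_mem measurableSet_Ioi] with t ht
      have ht0 : 0 < t := ha.trans ht
      rw [hh_def]
      rw [Real.norm_eq_abs, abs_div, abs_of_pos (by positivity : (0:ℝ) < 2 * t ^ 2)]
      apply div_le_div_of_nonneg_right ?_ (by positivity)
      exact Real.abs_cos_le_one _
  set J : ℝ := ∫ t in Ioi a, h t with hJ_def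
  -- FTC on finite intervals
  have key : ∀ R : ℝ, a ≤ R →
      (∫ t in a..R, Real.sin (η - t ^ 2)) = (g R - g a) + ∫ t in a..R, h t := by
    intro R hR
    have huIcc : uIcc a R = Icc a R := uIcc_of_le hR
    have hpos : ∀ t ∈ uIcc a R, 0 < t := by
      intro t ht
      rw [huIcc] at ht
      exact lt_of_lt_of_le ha ht.1
    have hh_contOn : ContinuousOn h (uIcc a R) := by
      apply ContinuousOn.div
      · exact (Real.continuous_cos.comp (continuous_const.sub (continuous_pow 2))).continuousOn
      · exact (continuous_const.mul (continuous_pow 2)).continuousOn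
      · intro t ht
        have := hpos t ht
        positivity
    have hInt2 : IntervalIntegrable h volume a R := hh_contOn.intervalIntegrable
    have hInt1 : IntervalIntegrable (fun t => Real.sin (η - t ^ 2)) volume a R :=
      (Real.continuous_sin.comp (continuous_const.sub (continuous_pow 2))).intervalIntegrable _ _
    have hftc := intervalIntegral.integral_eq_sub_of_hasDerivAt
      (f := g) (f' := fun t => Real.sin (η - t ^ 2) - h t)
      (fun t ht => hg_deriv t (hpos t ht).ne') (hInt1.sub hInt2)
    rw [intervalIntegral.integral_sub hInt1 hInt2] at hftc
    linarith
  -- limits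
  have hga : g a = 1 / (2 * a) := by
    rw [hg_def]
    simp only
    rw [ha2.symm]
    simp
  have hg0 : Tendsto g atTop (nhds 0) := by
    have hb : ∀ᶠ R : ℝ in atTop, ‖g R‖ ≤ 1 / (2 * R) := by
      filter_upwards [eventually_gt_atTop (0 : ℝ)] with R hR
      rw [hg_def]
      simp only
      rw [Real.norm_eq_abs, abs_div, abs_of_pos (by positivity : (0:ℝ) < 2 * R)]
      apply div_le_div_of_nonneg_right (Real.abs_cos_le_one _) (by positivity)
    have hb2 : Tendsto (fun R : ℝ => 1 / (2 * R)) atTop (nhds 0) := by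
      simp only [one_div]
      exact (tendsto_id.const_mul_atTop (by norm_num : (0:ℝ) < 2)).inv_tendsto_atTop
    exact squeeze_zero_norm' hb hb2
  have hJT : Tendsto (fun R : ℝ => ∫ t in a..R, h t) atTop (nhds J) :=
    intervalIntegral_tendsto_integral_Ioi a hh_int tendsto_id
  have hT : Tendsto (fun R : ℝ => ∫ t in a..R, Real.sin (η - t ^ 2)) atTop
      (nhds (J - 1 / (2 * a))) := by
    have := ((hg0.sub tendsto_const_nhds).add hJT :
      Tendsto (fun R : ℝ => (g R - g a) + ∫ t in a..R, h t) atTop (nhds ((0 - g a) + J)))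
    rw [hga] at this
    have heq : ((0 : ℝ) - 1 / (2 * a)) + J = J - 1 / (2 * a) := by ring
    rw [heq] at this
    apply this.congr'
    filter_upwards [eventually_ge_atTop a] with R hR
    rw [key R hR, hga]
  -- bound on J
  have hint_eq : (∫ t in Ioi a, 1 / (2 * t ^ 2)) = 1 / (2 * a) := by
    have hderiv : ∀ x ∈ Ici a, HasDerivAt (fun t : ℝ => -(1 / (2 * t))) (1 / (2 * x ^ 2)) x := by
      intro x hx
      have hx0 : x ≠ 0 := (lt_of_lt_of_le ha hx).ne'
      have h3 : HasDerivAt (fun t : ℝ => (2 : ℝ) * t) 2 x := by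
        simpa using (hasDerivAt_id x).const_mul (2 : ℝ)
      have h4 := ((hasDerivAt_const x (1:ℝ)).div h3 (by simpa using hx0)).neg
      convert h4 using 1
      rotate_right
      field_simp
      ring
      all_goals rfl
    have hlim : Tendsto (fun t : ℝ => -(1 / (2 * t))) atTop (nhds 0) := by
      rw [show (0:ℝ) = -0 by norm_num]
      apply Tendsto.neg
      simp only [one_div]
      exact (tendsto_id.const_mul_atTop (by norm_num : (0:ℝ) < 2)).inv_tendsto_atTop
    have := integral_Ioi_of_hasDerivAt_of_tendsto' hderiv hbound_int hlim
    rw [this]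
    ring
  have hJbound : |J| ≤ 1 / (2 * a) := by
    rw [← hint_eq, hJ_def, ← Real.norm_eq_abs]
    apply MeasureTheory.norm_integral_le_of_norm_le hbound_int
    filter_upwards [ae_restrict_mem measurableSet_Ioi] with t ht
    have ht0 : 0 < t := ha.trans ht
    rw [hh_def]
    simp only
    rw [Real.norm_eq_abs, abs_div, abs_of_pos (by positivity : (0:ℝ) < 2 * t ^ 2)]
    apply div_le_div_of_nonneg_right (Real.abs_cos_le_one _) (by positivity)
  refine ⟨J - 1 / (2 * a), hT, ?_, ?_⟩
  · rw [abs_le] at hJbound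
    linarith
  · rw [abs_le] at hJbound
    have h5 : 1 / a = 1 / (2 * a) + 1 / (2 * a) := by
      field_simp
      ring
    rw [show (1 : ℝ) / Real.sqrt η = 1 / a from rfl, h5]
    linarith
end

section
/- For all real z > 0, the function z ↦ coth(z)/z − 1/z² is nonnegative, monotonically decreasing, and bounded above by its limit 1/3 as z → 0⁺; in particular 0 ≤ coth(z)/z − 1/z² ≤ 1/3 for all z > 0. -/
open Real Set Filter Topology

-- generic helper
lemma nonneg_of_deriv_aux (g g' : ℝ → ℝ) (hg : ∀ x, HasDerivAt g (g' x) x)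
    (h0 : g 0 = 0) (h' : ∀ x, 0 < x → 0 ≤ g' x) : ∀ x, 0 ≤ x → 0 ≤ g x := by
  intro x hx
  have hm : MonotoneOn g (Ici 0) := by
    apply monotoneOn_of_deriv_nonneg (convex_Ici 0)
      (fun y _ => (hg y).continuousAt.continuousWithinAt)
      (fun y _ => (hg y).differentiableAt.differentiableWithinAt)
    intro y hy
    rw [interior_Ici] at hy
    rw [(hg y).deriv]
    exact h' y hy
  calc (0:ℝ) = g 0 := h0.symm
    _ ≤ g x := hm (self_mem_Ici) hx hx

lemma sinh_le_mul_cosh {z : ℝ} (hz : 0 ≤ z) : Real.sinh z ≤ z * Real.cosh z := by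
  have := nonneg_of_deriv_aux (fun z => z * Real.cosh z - Real.sinh z)
    (fun z => z * Real.sinh z)
    (fun x => by
      have h := ((hasDerivAt_id x).mul (Real.hasDerivAt_cosh x)).sub (Real.hasDerivAt_sinh x)
      convert h using 1 <;> (try rfl) <;> simp [id_eq] <;> ring)
    (by simp)
    (fun x hx => mul_nonneg hx.le (Real.sinh_nonneg_iff.mpr hx.le)) z hz
  simpa [sub_nonneg] using this

lemma G2_nonneg {z : ℝ} (hz : 0 ≤ z) :
    0 ≤ 2 - 2 * Real.cosh z ^ 2 - 2 * Real.sinh z ^ 2 + 4 * z * Real.sinh z * Real.cosh z := by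
  have := nonneg_of_deriv_aux
    (fun z => 2 - 2 * Real.cosh z ^ 2 - 2 * Real.sinh z ^ 2 + 4 * z * Real.sinh z * Real.cosh z)
    (fun z => 4 * z * (Real.cosh z ^ 2 + Real.sinh z ^ 2) - 4 * Real.sinh z * Real.cosh z)
    (fun x => by
      have h1 := Real.hasDerivAt_cosh x
      have h2 := Real.hasDerivAt_sinh x
      have h := ((((hasDerivAt_const x (2:ℝ)).sub ((h1.pow 2).const_mul 2)).sub
        ((h2.pow 2).const_mul 2)).add
        ((((hasDerivAt_id x).const_mul 4).mul h2).mul h1))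
      convert h using 1 <;> (try rfl) <;> simp [id_eq] <;> ring)
    (by simp)
    (fun x hx => by
      have h1 : Real.sinh x ≤ x * Real.cosh x := sinh_le_mul_cosh hx.le
      have h2 : 0 ≤ Real.sinh x := Real.sinh_nonneg_iff.mpr hx.le
      have h3 : 0 < Real.cosh x := Real.cosh_pos x
      nlinarith) z hz
  simpa using this

lemma G1_nonneg {z : ℝ} (hz : 0 ≤ z) :
    0 ≤ 2 * z + z * Real.cosh z ^ 2 + z * Real.sinh z ^ 2 - 3 * Real.sinh z * Real.cosh z := by
  have := nonneg_of_deriv_aux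
    (fun z => 2 * z + z * Real.cosh z ^ 2 + z * Real.sinh z ^ 2 - 3 * Real.sinh z * Real.cosh z)
    (fun z => 2 - 2 * Real.cosh z ^ 2 - 2 * Real.sinh z ^ 2 + 4 * z * Real.sinh z * Real.cosh z)
    (fun x => by
      have h1 := Real.hasDerivAt_cosh x
      have h2 := Real.hasDerivAt_sinh x
      have h := ((((hasDerivAt_id x).const_mul 2).add
        ((hasDerivAt_id x).mul (h1.pow 2))).add ((hasDerivAt_id x).mul (h2.pow 2))).sub
        (((h2.const_mul 3).mul h1))
      convert h using 1 <;> (try rfl) <;> simp [id_eq]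
      have hc := Real.cosh_sq_sub_sinh_sq x
      nlinarith [hc])
    (by simp)
    (fun x hx => G2_nonneg hx.le) z hz
  simpa using this

lemma key_ineq {z : ℝ} (hz : 0 ≤ z) :
    2 * Real.sinh z ^ 2 ≤ z ^ 2 + z * Real.sinh z * Real.cosh z := by
  have := nonneg_of_deriv_aux
    (fun z => z ^ 2 + z * Real.sinh z * Real.cosh z - 2 * Real.sinh z ^ 2)
    (fun z => 2 * z + z * Real.cosh z ^ 2 + z * Real.sinh z ^ 2 - 3 * Real.sinh z * Real.cosh z)
    (fun x => by
      have h1 := Real.hasDerivAt_cosh x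
      have h2 := Real.hasDerivAt_sinh x
      have h := ((hasDerivAt_pow 2 x).add (((hasDerivAt_id x).mul h2).mul h1)).sub
        ((h2.pow 2).const_mul 2)
      convert h using 1 <;> (try rfl) <;> simp [id_eq]
      have hc := Real.cosh_sq_sub_sinh_sq x
      nlinarith [hc])
    (by simp)
    (fun x hx => G1_nonneg hx.le) z hz
  simpa [sub_nonneg] using this

lemma hD1 (x : ℝ) : HasDerivAt (fun z => z * Real.cosh z - Real.sinh z) (x * Real.sinh x) x := by
  have h := ((hasDerivAt_id x).mul (Real.hasDerivAt_cosh x)).sub (Real.hasDerivAt_sinh x)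
  convert h using 1
  · rfl
  · rfl
  · rfl
  simp [id_eq]

lemma f_hasDerivAt {z : ℝ} (hz : 0 < z) :
    HasDerivAt (fun z => Real.cosh z / Real.sinh z / z - 1 / z ^ 2)
      (-((z ^ 2 + z * Real.sinh z * Real.cosh z - 2 * Real.sinh z ^ 2) /
        (z ^ 3 * Real.sinh z ^ 2))) z := by
  have hs : Real.sinh z ≠ 0 := ne_of_gt (Real.sinh_pos_iff.mpr hz)
  have hz' : z ≠ 0 := ne_of_gt hz
  have h1 := ((Real.hasDerivAt_cosh z).div (Real.hasDerivAt_sinh z) hs).div (hasDerivAt_id z) hz'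
  have h2 := (hasDerivAt_const z (1:ℝ)).div (hasDerivAt_pow 2 z) (pow_ne_zero 2 hz')
  have h := h1.sub h2
  convert h using 1
  · rfl
  · rfl
  · rfl
  have hc := Real.cosh_sq_sub_sinh_sq z
  have hsc : Real.sinh z * Real.sinh z - Real.cosh z * Real.cosh z = -1 := by nlinarith [hc]
  simp only [id_eq, Pi.div_apply]
  rw [hsc]
  field_simp
  ring

lemma sinh_div_tendsto : Tendsto (fun z => Real.sinh z / z) (𝓝[>] (0:ℝ)) (𝓝 1) := by
  have h := hasDerivAt_iff_tendsto_slope.mp (Real.hasDerivAt_sinh 0)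
  rw [Real.cosh_zero] at h
  have h2 : Tendsto (slope Real.sinh 0) (𝓝[>] (0:ℝ)) (𝓝 1) :=
    h.mono_left (nhdsWithin_mono _ (fun x hx => ne_of_gt hx))
  refine h2.congr' ?_
  filter_upwards [self_mem_nhdsWithin] with z hz
  simp [slope_def_field, div_eq_div_iff]

lemma limA : Tendsto (fun z => (z * Real.cosh z - Real.sinh z) / z ^ 3)
    (𝓝[>] (0:ℝ)) (𝓝 (1/3)) := by
  apply HasDerivAt.lhopital_zero_nhdsGT
    (f' := fun z => z * Real.sinh z) (g' := fun z => 3 * z ^ 2)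
  · exact Eventually.of_forall hD1
  · refine Eventually.of_forall fun x => ?_
    have h := hasDerivAt_pow 3 x
    norm_num at h
    exact h
  · filter_upwards [self_mem_nhdsWithin] with z hz
    have hz' : (0:ℝ) < z := hz
    positivity
  · have : Tendsto (fun z => z * Real.cosh z - Real.sinh z) (𝓝 (0:ℝ)) (𝓝 0) := by
      have := ((continuous_id.mul Real.continuous_cosh).sub Real.continuous_sinh).tendsto 0
      simpa [Pi.mul_def, Pi.sub_def] using this
    exact this.mono_left nhdsWithin_le_nhds
  · have : Tendsto (fun z : ℝ => z ^ 3) (𝓝 (0:ℝ)) (𝓝 0) := by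
      simpa using (continuous_pow 3).tendsto (0:ℝ)
    exact this.mono_left nhdsWithin_le_nhds
  · have h : Tendsto (fun z => Real.sinh z / z / 3) (𝓝[>] (0:ℝ)) (𝓝 (1/3)) := by
      simpa using sinh_div_tendsto.div_const 3
    refine h.congr' ?_
    filter_upwards [self_mem_nhdsWithin] with z hz
    have hz' : z ≠ 0 := ne_of_gt hz
    field_simp

theorem coth_over_z_minus_inv_sq (f : ℝ → ℝ)
    (hf : ∀ z : ℝ, f z = Real.cosh z / Real.sinh z / z - 1 / z ^ 2) :
    AntitoneOn f (Set.Ioi (0 : ℝ)) ∧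
    Filter.Tendsto f (nhdsWithin 0 (Set.Ioi (0 : ℝ))) (nhds (1 / 3)) ∧
    ∀ z : ℝ, 0 < z → 0 ≤ f z ∧ f z ≤ 1 / 3 := by
  have hfeq : f = fun z => Real.cosh z / Real.sinh z / z - 1 / z ^ 2 := funext hf
  subst hfeq
  set g : ℝ → ℝ := fun z => Real.cosh z / Real.sinh z / z - 1 / z ^ 2 with hg
  have hA : AntitoneOn g (Set.Ioi (0:ℝ)) := by
    apply antitoneOn_of_deriv_nonpos (convex_Ioi 0)
    · exact fun z hz => (f_hasDerivAt (mem_Ioi.mp hz)).continuousAt.continuousWithinAt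
    · intro z hz
      rw [interior_Ioi] at hz
      exact (f_hasDerivAt (mem_Ioi.mp hz)).differentiableAt.differentiableWithinAt
    · intro z hz
      rw [interior_Ioi] at hz
      have hz' : 0 < z := mem_Ioi.mp hz
      rw [(f_hasDerivAt hz').deriv]
      have hnum : 0 ≤ z ^ 2 + z * Real.sinh z * Real.cosh z - 2 * Real.sinh z ^ 2 := by
        linarith [key_ineq hz'.le]
      have hden : 0 < z ^ 3 * Real.sinh z ^ 2 := by
        have := Real.sinh_pos_iff.mpr hz'
        positivity
      exact neg_nonpos_of_nonneg (div_nonneg hnum hden.le)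
  have hL : Tendsto g (𝓝[>] (0:ℝ)) (𝓝 (1/3)) := by
    have hB : Tendsto (fun z => z / Real.sinh z) (𝓝[>] (0:ℝ)) (𝓝 1) := by
      have := sinh_div_tendsto.inv₀ one_ne_zero
      simp only [inv_one] at this
      refine this.congr fun z => ?_
      rw [inv_div]
    have h := limA.mul hB
    rw [show (1/3 : ℝ) * 1 = 1/3 by norm_num] at h
    refine h.congr' ?_
    filter_upwards [self_mem_nhdsWithin] with z hz
    have hz' : z ≠ 0 := ne_of_gt hz
    have hs : Real.sinh z ≠ 0 := ne_of_gt (Real.sinh_pos_iff.mpr hz)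
    simp only [hg]
    field_simp
  refine ⟨hA, hL, fun z hz => ⟨?_, ?_⟩⟩
  · have hs : 0 < Real.sinh z := Real.sinh_pos_iff.mpr hz
    have heq : g z = (z * Real.cosh z - Real.sinh z) / (z ^ 2 * Real.sinh z) := by
      simp only [hg]
      field_simp
    rw [heq]
    exact div_nonneg (by linarith [sinh_le_mul_cosh hz.le]) (by positivity)
  · refine ge_of_tendsto hL ?_
    filter_upwards [Ioo_mem_nhdsGT_of_mem (by simp [hz] : (0:ℝ) ∈ Ico (0:ℝ) z)] with w hw
    exact hA (mem_Ioi.mpr hw.1) (mem_Ioi.mpr hz) hw.2.le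
end

section
/- Let f : [−1/2, 1/2] → ℝ be an integrable function with Fourier cosine coefficients a₀ = ∫_{−1/2}^{1/2} f(τ) dτ and a_p = ∫_{−1/2}^{1/2} f(τ) cos(2πpτ) dτ for p ≥ 1. Then the supremum of f over [−1/2, 1/2] is at least a₀ + (1/2)·sup_{p≥1} |a_p|, and the infimum of f over [−1/2, 1/2] is at most a₀ − (1/2)·sup_{p≥1} |a_p|. -/
open Real Set intervalIntegral

theorem fourier_coeff_sup_inf_bound (f : ℝ → ℝ)
    (hint : IntervalIntegrable f MeasureTheory.volume (-(1 / 2)) (1 / 2))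
    (hbdd : ∃ M : ℝ, ∀ τ ∈ Set.Icc (-(1 / 2) : ℝ) (1 / 2), |f τ| ≤ M)
    (a : ℕ → ℝ)
    (ha0 : a 0 = ∫ τ in (-(1 / 2) : ℝ)..(1 / 2), f τ)
    (hap : ∀ p : ℕ, 1 ≤ p →
      a p = ∫ τ in (-(1 / 2) : ℝ)..(1 / 2), f τ * Real.cos (2 * Real.pi * p * τ)) :
    a 0 + (1 / 2) * (⨆ p : {p : ℕ // 1 ≤ p}, |a p|) ≤
      sSup (f '' Set.Icc (-(1 / 2) : ℝ) (1 / 2)) ∧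
    sInf (f '' Set.Icc (-(1 / 2) : ℝ) (1 / 2)) ≤
      a 0 - (1 / 2) * (⨆ p : {p : ℕ // 1 ≤ p}, |a p|) := by
  obtain ⟨M, hM⟩ := hbdd
  set S := sSup (f '' Set.Icc (-(1 / 2) : ℝ) (1 / 2)) with hSdef
  set I := sInf (f '' Set.Icc (-(1 / 2) : ℝ) (1 / 2)) with hIdef
  have hmem : (0 : ℝ) ∈ Set.Icc (-(1 / 2) : ℝ) (1 / 2) := by norm_num
  have hbA : BddAbove (f '' Set.Icc (-(1 / 2) : ℝ) (1 / 2)) := by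
    refine ⟨M, ?_⟩
    rintro y ⟨τ, hτ, rfl⟩
    exact (abs_le.mp (hM τ hτ)).2
  have hbB : BddBelow (f '' Set.Icc (-(1 / 2) : ℝ) (1 / 2)) := by
    refine ⟨-M, ?_⟩
    rintro y ⟨τ, hτ, rfl⟩
    exact (abs_le.mp (hM τ hτ)).1
  have hfS : ∀ τ ∈ Set.Icc (-(1 / 2) : ℝ) (1 / 2), f τ ≤ S :=
    fun τ hτ => le_csSup hbA ⟨τ, hτ, rfl⟩
  have hIf : ∀ τ ∈ Set.Icc (-(1 / 2) : ℝ) (1 / 2), I ≤ f τ :=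
    fun τ hτ => csInf_le hbB ⟨τ, hτ, rfl⟩
  -- the cosine integral vanishes
  have hcos : ∀ p : ℕ, 1 ≤ p →
      (∫ τ in (-(1 / 2) : ℝ)..(1 / 2), Real.cos (2 * Real.pi * p * τ)) = 0 := by
    intro p hp
    have hpne : (p : ℝ) ≠ 0 := Nat.cast_ne_zero.mpr (by omega)
    have hc : (2 * Real.pi * p) ≠ 0 := by
      have := Real.pi_ne_zero
      positivity
    rw [show (fun τ : ℝ => Real.cos (2 * Real.pi * p * τ)) =
        (fun τ : ℝ => Real.cos ((2 * Real.pi * p) * τ)) from rfl,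
      intervalIntegral.integral_comp_mul_left _ hc]
    have h1 : (2 * Real.pi * p) * (1 / 2) = p * Real.pi := by ring
    have h2 : (2 * Real.pi * p) * (-(1 / 2)) = -(p * Real.pi) := by ring
    rw [h1, h2, integral_cos, Real.sin_neg, Real.sin_nat_mul_pi]
    simp
  -- key inequality
  have key : ∀ p : ℕ, 1 ≤ p → ∀ ε : ℝ, ε = 1 ∨ ε = -1 →
      I ≤ a 0 + ε * a p ∧ a 0 + ε * a p ≤ S := by
    intro p hp ε hε
    have hc2 : Continuous fun τ : ℝ => Real.cos (2 * Real.pi * p * τ) :=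
      Real.continuous_cos.comp (continuous_const.mul continuous_id)
    have hw : Continuous fun τ : ℝ => 1 + ε * Real.cos (2 * Real.pi * p * τ) :=
      continuous_const.add (continuous_const.mul hc2)
    have hεabs : ∀ τ : ℝ, 0 ≤ 1 + ε * Real.cos (2 * Real.pi * p * τ) := by
      intro τ
      have h1 := Real.neg_one_le_cos (2 * Real.pi * p * τ)
      have h2 := Real.cos_le_one (2 * Real.pi * p * τ)
      rcases hε with rfl | rfl <;> nlinarith
    have hcont : ContinuousOn (fun τ : ℝ => 1 + ε * Real.cos (2 * Real.pi * p * τ))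
        (Set.uIcc (-(1 / 2) : ℝ) (1 / 2)) := hw.continuousOn
    have hfcosint : IntervalIntegrable (fun τ => f τ * Real.cos (2 * Real.pi * p * τ))
        MeasureTheory.volume (-(1 / 2)) (1 / 2) :=
      hint.mul_continuousOn hc2.continuousOn
    have hgint : IntervalIntegrable
        (fun τ => f τ * (1 + ε * Real.cos (2 * Real.pi * p * τ)))
        MeasureTheory.volume (-(1 / 2)) (1 / 2) := hint.mul_continuousOn hcont
    have hwint : IntervalIntegrable
        (fun τ : ℝ => 1 + ε * Real.cos (2 * Real.pi * p * τ))
        MeasureTheory.volume (-(1 / 2)) (1 / 2) := hw.intervalIntegrable _ _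
    have hwval : (∫ τ in (-(1 / 2) : ℝ)..(1 / 2),
        (1 + ε * Real.cos (2 * Real.pi * p * τ))) = 1 := by
      rw [intervalIntegral.integral_add intervalIntegrable_const
          ((hc2.intervalIntegrable _ _).const_mul ε),
        intervalIntegral.integral_const_mul, hcos p hp]
      simp
      norm_num
    have hgval : (∫ τ in (-(1 / 2) : ℝ)..(1 / 2),
        f τ * (1 + ε * Real.cos (2 * Real.pi * p * τ))) = a 0 + ε * a p := by
      have : (fun τ => f τ * (1 + ε * Real.cos (2 * Real.pi * p * τ)))
          = (fun τ => f τ + ε * (f τ * Real.cos (2 * Real.pi * p * τ))) := by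
        funext τ; ring
      rw [this, intervalIntegral.integral_add hint (hfcosint.const_mul ε),
        intervalIntegral.integral_const_mul, ha0, hap p hp]
    have hle : (-(1 / 2) : ℝ) ≤ 1 / 2 := by norm_num
    constructor
    · have hmono : (∫ τ in (-(1 / 2) : ℝ)..(1 / 2),
          I * (1 + ε * Real.cos (2 * Real.pi * p * τ))) ≤
          ∫ τ in (-(1 / 2) : ℝ)..(1 / 2),
            f τ * (1 + ε * Real.cos (2 * Real.pi * p * τ)) := by
        apply intervalIntegral.integral_mono_on hle (hwint.const_mul I) hgint
        intro τ hτ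
        exact mul_le_mul_of_nonneg_right (hIf τ hτ) (hεabs τ)
      rw [hgval] at hmono
      rwa [intervalIntegral.integral_const_mul, hwval, mul_one] at hmono
    · have hmono : (∫ τ in (-(1 / 2) : ℝ)..(1 / 2),
          f τ * (1 + ε * Real.cos (2 * Real.pi * p * τ))) ≤
          ∫ τ in (-(1 / 2) : ℝ)..(1 / 2),
            S * (1 + ε * Real.cos (2 * Real.pi * p * τ)) := by
        apply intervalIntegral.integral_mono_on hle hgint (hwint.const_mul S)
        intro τ hτ
        exact mul_le_mul_of_nonneg_right (hfS τ hτ) (hεabs τ)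
      rw [hgval] at hmono
      rwa [intervalIntegral.integral_const_mul, hwval, mul_one] at hmono
  have hS1 : ∀ p : ℕ, 1 ≤ p → a 0 + |a p| ≤ S := by
    intro p hp
    rcases abs_cases (a p) with ⟨h, _⟩ | ⟨h, _⟩
    · have := (key p hp 1 (Or.inl rfl)).2; rw [h]; linarith
    · have := (key p hp (-1) (Or.inr rfl)).2; rw [h]; linarith
  have hI1 : ∀ p : ℕ, 1 ≤ p → I + |a p| ≤ a 0 := by
    intro p hp
    rcases abs_cases (a p) with ⟨h, _⟩ | ⟨h, _⟩
    · have := (key p hp (-1) (Or.inr rfl)).1; rw [h]; linarith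
    · have := (key p hp 1 (Or.inl rfl)).1; rw [h]; linarith
  haveI : Nonempty {p : ℕ // 1 ≤ p} := ⟨⟨1, le_refl 1⟩⟩
  set T := ⨆ p : {p : ℕ // 1 ≤ p}, |a p| with hTdef
  have hTS : T ≤ S - a 0 := ciSup_le fun p => by linarith [hS1 p.1 p.2]
  have hTI : T ≤ a 0 - I := ciSup_le fun p => by linarith [hI1 p.1 p.2]
  have hT0 : 0 ≤ T := by
    have hbdd : BddAbove (Set.range fun p : {p : ℕ // 1 ≤ p} => |a p|) := by
      refine ⟨S - a 0, ?_⟩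
      rintro y ⟨p, rfl⟩
      linarith [hS1 p.1 p.2]
    calc (0 : ℝ) ≤ |a 1| := abs_nonneg _
      _ ≤ T := le_ciSup hbdd ⟨1, le_refl 1⟩
  constructor <;> [skip; skip] <;> linarith
end

section
/- Let z₀ ∈ (0, π/6) be the unique root of sin z = 3^{−3/2}·cos(3z) in that interval. Then min_{z ∈ [0, π]} max{ |sin z|, 3^{−3/2}|cos 3z| } = sin z₀. -/
open Real Set

theorem min_max_sin_cos (z₀ : ℝ) (hz₀ : z₀ ∈ Set.Ioo (0 : ℝ) (Real.pi / 6))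
    (hroot : Real.sin z₀ = 3 ^ (-(3 : ℝ) / 2) * Real.cos (3 * z₀))
    (huniq : ∀ z ∈ Set.Ioo (0 : ℝ) (Real.pi / 6),
      Real.sin z = 3 ^ (-(3 : ℝ) / 2) * Real.cos (3 * z) → z = z₀) :
    IsLeast ((fun z => max |Real.sin z| (3 ^ (-(3 : ℝ) / 2) * |Real.cos (3 * z)|)) ''
      Set.Icc (0 : ℝ) Real.pi) (Real.sin z₀) := by
  have hc : (0:ℝ) < 3 ^ (-(3:ℝ)/2) := by positivity
  have hpi := Real.pi_pos
  have hz1 := hz₀.1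
  have hz2 := hz₀.2
  have h3z₀ : 3 * z₀ < Real.pi / 2 := by linarith
  have hcos : 0 < Real.cos (3 * z₀) :=
    Real.cos_pos_of_mem_Ioo ⟨by linarith, h3z₀⟩
  have hsin : 0 < Real.sin z₀ := by rw [hroot]; positivity
  constructor
  · exact ⟨z₀, ⟨le_of_lt hz1, by linarith⟩, by
      simp only [abs_of_pos hsin, abs_of_pos hcos, ← hroot, max_self]⟩
  · rintro y ⟨z, ⟨hz0, hzpi⟩, rfl⟩
    simp only
    rw [abs_of_nonneg (Real.sin_nonneg_of_nonneg_of_le_pi hz0 hzpi)]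
    rcases le_or_gt z₀ z with h1 | h1
    · rcases le_or_gt z (Real.pi - z₀) with h2 | h2
      · refine le_max_of_le_left ?_
        rcases le_or_gt z (Real.pi / 2) with h3 | h3
        · exact Real.sin_le_sin_of_le_of_le_pi_div_two (by linarith) h3 h1
        · rw [← Real.sin_pi_sub z]
          exact Real.sin_le_sin_of_le_of_le_pi_div_two (by linarith) (by linarith)
            (by linarith)
      · -- z > π - z₀
        refine le_max_of_le_right ?_
        have hkey : Real.cos (3 * Real.pi - 3 * z) = - Real.cos (3 * z) := by
          have h : 3*Real.pi - 3*z = Real.pi - (3*z - 2*Real.pi) := by ring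
          rw [h, Real.cos_pi_sub, Real.cos_sub_two_pi]
        have ht : Real.cos (3 * z₀) ≤ Real.cos (3 * Real.pi - 3 * z) :=
          Real.cos_le_cos_of_nonneg_of_le_pi (by linarith) (by linarith) (by linarith)
        have habs : Real.cos (3 * z₀) ≤ |Real.cos (3 * z)| := by
          calc Real.cos (3 * z₀) ≤ Real.cos (3 * Real.pi - 3 * z) := ht
            _ = |Real.cos (3 * Real.pi - 3 * z)| :=
                (abs_of_pos (lt_of_lt_of_le hcos ht)).symm
            _ = |Real.cos (3 * z)| := by rw [hkey, abs_neg]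
        calc Real.sin z₀ = 3 ^ (-(3:ℝ)/2) * Real.cos (3*z₀) := hroot
          _ ≤ 3 ^ (-(3:ℝ)/2) * |Real.cos (3*z)| :=
              mul_le_mul_of_nonneg_left habs hc.le
    · refine le_max_of_le_right ?_
      have ht : Real.cos (3 * z₀) ≤ Real.cos (3 * z) :=
        Real.cos_le_cos_of_nonneg_of_le_pi (by linarith) (by linarith) (by linarith)
      calc Real.sin z₀ = 3 ^ (-(3:ℝ)/2) * Real.cos (3*z₀) := hroot
        _ ≤ 3 ^ (-(3:ℝ)/2) * |Real.cos (3*z)| := by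
            rw [abs_of_pos (lt_of_lt_of_le hcos ht)]
            exact mul_le_mul_of_nonneg_left ht hc.le
end

section
/- The equation sin z = 3^{−3/2} cos(3z) for z ∈ (0, π/6) is equivalent to the cubic equation 3^{3/2}·t³ + 3t² + 3^{3/2}·t − 1 = 0 in t = tan z, and this cubic has the real root t = c₂, where c₂ = ((78√3 + 54√11)^{1/3} − √3)/9 − 8/(3·(78√3 + 54√11)^{1/3}). -/
open Real

theorem cubic_equation_for_tan (c₂ : ℝ)
    (hc₂ : c₂ = ((78 * Real.sqrt 3 + 54 * Real.sqrt 11) ^ ((1 : ℝ) / 3) - Real.sqrt 3) / 9 -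
      8 / (3 * (78 * Real.sqrt 3 + 54 * Real.sqrt 11) ^ ((1 : ℝ) / 3))) :
    (∀ z ∈ Set.Ioo (0 : ℝ) (Real.pi / 6),
      (Real.sin z = 3 ^ (-(3 : ℝ) / 2) * Real.cos (3 * z) ↔
        3 ^ ((3 : ℝ) / 2) * Real.tan z ^ 3 + 3 * Real.tan z ^ 2 +
          3 ^ ((3 : ℝ) / 2) * Real.tan z - 1 = 0)) ∧
    3 ^ ((3 : ℝ) / 2) * c₂ ^ 3 + 3 * c₂ ^ 2 + 3 ^ ((3 : ℝ) / 2) * c₂ - 1 = 0 := by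
  have hs : Real.sqrt 3 ^ 2 = 3 := Real.sq_sqrt (by norm_num)
  have hu : Real.sqrt 11 ^ 2 = 11 := Real.sq_sqrt (by norm_num)
  have hs0 : (0:ℝ) < Real.sqrt 3 := Real.sqrt_pos.2 (by norm_num)
  have hu0 : (0:ℝ) < Real.sqrt 11 := Real.sqrt_pos.2 (by norm_num)
  have hr : (3:ℝ) ^ ((3:ℝ)/2) = 3 * Real.sqrt 3 := by
    rw [show ((3:ℝ)/2) = (1:ℝ)/2 + 1 by norm_num, Real.rpow_add (by norm_num), Real.rpow_one,
      ← Real.sqrt_eq_rpow]; ring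
  have hrn : (3:ℝ) ^ (-(3:ℝ)/2) = 1 / (3 * Real.sqrt 3) := by
    rw [show (-(3:ℝ)/2) = -((3:ℝ)/2) by ring, Real.rpow_neg (by norm_num), hr, inv_eq_one_div]
  constructor
  · intro z hz
    have hpi := Real.pi_pos
    have hc : 0 < Real.cos z :=
      Real.cos_pos_of_mem_Ioo ⟨by linarith [hz.1], by linarith [hz.2]⟩
    have hc' : Real.cos z ≠ 0 := ne_of_gt hc
    have hpy := Real.sin_sq_add_cos_sq z
    rw [Real.tan_eq_sin_div_cos, Real.cos_three_mul, hr, hrn]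
    constructor
    · intro h
      field_simp at h ⊢
      linear_combination h +
        (3*Real.sqrt 3*Real.sin z + 3*Real.cos z) * hpy
    · intro h
      field_simp at h ⊢
      have h2 : Real.cos z^3 *
          (3*Real.sqrt 3*Real.sin z - (4*Real.cos z^3 - 3*Real.cos z)) = 0 := by
        linear_combination (Real.cos z^3) * h - (3*Real.sqrt 3*Real.sin z*Real.cos z^3 + 3*Real.cos z^4) * hpy
      have h3 := (mul_eq_zero.1 h2).resolve_left (pow_ne_zero 3 hc')
      linear_combination h3
  · set a := (78 * Real.sqrt 3 + 54 * Real.sqrt 11) ^ ((1:ℝ)/3) with ha_def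
    have hb0 : (0:ℝ) < 78 * Real.sqrt 3 + 54 * Real.sqrt 11 := by positivity
    have ha0 : 0 < a := Real.rpow_pos_of_pos hb0 _
    have ha' : a ≠ 0 := ne_of_gt ha0
    have ha3 : a ^ 3 = 78 * Real.sqrt 3 + 54 * Real.sqrt 11 := by
      rw [ha_def, ← Real.rpow_natCast (_ ^ ((1:ℝ)/3)) 3, ← Real.rpow_mul hb0.le]
      norm_num
    have hc : c₂ = (a^2 - Real.sqrt 3 * a - 24) / (9*a) := by
      rw [hc₂]; field_simp; ring
    have key : 3 * Real.sqrt 3 * c₂ ^ 3 + 3 * c₂ ^ 2 + 3 * Real.sqrt 3 * c₂ - 1 =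
        (3*Real.sqrt 3*(a^2 - Real.sqrt 3*a - 24)^3 + 27*a*(a^2 - Real.sqrt 3*a - 24)^2
          + 243*Real.sqrt 3*a^2*(a^2 - Real.sqrt 3*a - 24) - 729*a^3) / (729*a^3) := by
      rw [hc]; field_simp; ring
    have hnum : 3*Real.sqrt 3*(a^2 - Real.sqrt 3*a - 24)^3 + 27*a*(a^2 - Real.sqrt 3*a - 24)^2
        + 243*Real.sqrt 3*a^2*(a^2 - Real.sqrt 3*a - 24) - 729*a^3 = 0 := by
      linear_combination (12636*Real.sqrt 11 - 5184*a - 216*a^2*Real.sqrt 3 + 441*a^3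
          - 3*a^3*Real.sqrt 3^2 + 9*a^4*Real.sqrt 3 - 9*a^5) * hs
        + (8748*Real.sqrt 3) * hu + (-702 + 162*Real.sqrt 3*Real.sqrt 11 + 3*a^3*Real.sqrt 3) * ha3
    rw [hr, key, hnum, zero_div]
end

section
/- For all real z, max{ |sin z|, 3^{−3/2}|cos 3z| } ≥ c₁, where c₁ = c₂/√(c₂²+1) and c₂ = ((78√3 + 54√11)^{1/3} − √3)/9 − 8/(3(78√3 + 54√11)^{1/3}). -/
open Real

private lemma aux_pos (g t : ℝ) (hg1 : 1 ≤ g)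
    (cubic : 3 * g * t ^ 3 + 3 * t ^ 2 + 3 * g * t = 1) : 0 < t := by
  by_contra h
  push_neg at h
  have hx : t ^ 3 + t ≤ 0 := by nlinarith [mul_nonneg (neg_nonneg.mpr h) (sq_nonneg t)]
  have h1' : (3 * g - 3) * (t ^ 3 + t) ≤ 0 :=
    mul_nonpos_of_nonneg_of_nonpos (by linarith) hx
  have h2' : (0:ℝ) ≤ t ^ 2 + t + 1 := by nlinarith [sq_nonneg (2 * t + 1)]
  have h3' : t * (t ^ 2 + t + 1) ≤ 0 := mul_nonpos_of_nonpos_of_nonneg h h2'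
  linarith

private lemma aux_small (g t : ℝ) (hg : 0 < g) (ht : 0 < t)
    (cubic : 3 * g * t ^ 3 + 3 * t ^ 2 + 3 * g * t = 1) : 3 * t ^ 2 < 1 := by
  have p1 : 0 < (3 * g * t) * (t ^ 2 + 1) := by positivity
  linarith

private lemma aux_half (t u : ℝ) (ht : 3 * t ^ 2 < 1) (hu : u * (t ^ 2 + 1) = t ^ 2) :
    4 * u ≤ 1 := by
  by_contra h
  push_neg at h
  nlinarith [mul_pos (by linarith : (0:ℝ) < 4 * u - 1) (by positivity : (0:ℝ) < t ^ 2 + 1)]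

private lemma aux_key (t u : ℝ) (h27 : 27 * t ^ 2 * (1 + t ^ 2) ^ 2 = (1 - 3 * t ^ 2) ^ 2)
    (hu : u * (t ^ 2 + 1) = t ^ 2) : 27 * u + u * (3 - 4 * u) ^ 2 = 1 := by
  have hne : t ^ 2 + 1 ≠ 0 := by positivity
  have h1 : u = t ^ 2 / (t ^ 2 + 1) := by field_simp; linarith
  rw [h1]
  field_simp
  linear_combination h27

private lemma aux_mono (s c : ℝ) (hs0 : 0 ≤ s) (hsc : s ≤ c) (hc : 0 < c) (hch : c ≤ 1/2) :
    s ^ 2 * (3 - 4 * s ^ 2) ^ 2 ≤ c ^ 2 * (3 - 4 * c ^ 2) ^ 2 := by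
  have p1 : (0:ℝ) ≤ (1 / 2 - c) * (1 / 2 + c) := mul_nonneg (by linarith) (by linarith)
  have p2 : (0:ℝ) ≤ (c - s) * (c + s) := mul_nonneg (by linarith) (by linarith)
  have p3 : (0:ℝ) ≤ (c - s) * c := mul_nonneg (by linarith) hc.le
  have h34 : (0:ℝ) ≤ 3 - 4 * (c ^ 2 + c * s + s ^ 2) := by nlinarith [p1, p2, p3]
  have hA : 0 ≤ s * (3 - 4 * s ^ 2) := by
    apply mul_nonneg hs0
    nlinarith [p1, p2]
  have hBA : s * (3 - 4 * s ^ 2) ≤ c * (3 - 4 * c ^ 2) := by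
    nlinarith [mul_nonneg (by linarith : (0:ℝ) ≤ c - s) h34]
  nlinarith [mul_nonneg (sub_nonneg.mpr hBA)
    (by linarith : (0:ℝ) ≤ s * (3 - 4 * s ^ 2) + c * (3 - 4 * c ^ 2))]

private lemma aux_sqrt3 : (1:ℝ) ≤ Real.sqrt 3 := by
  nlinarith [Real.sq_sqrt (by norm_num : (0:ℝ) ≤ 3), Real.sqrt_nonneg 3]

private lemma aux_pow : ((3:ℝ) ^ (-(3 : ℝ) / 2)) ^ 2 = 1 / 27 := by
  rw [← Real.rpow_natCast ((3:ℝ) ^ (-(3:ℝ)/2)) 2, ← Real.rpow_mul (by norm_num)]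
  norm_num

private lemma aux_of_sq (x y : ℝ) (hx : 0 ≤ x) (hy : 0 ≤ y) (h : x ^ 2 ≤ y ^ 2) : x ≤ y := by
  have := Real.sqrt_le_sqrt h
  rwa [Real.sqrt_sq hx, Real.sqrt_sq hy] at this

set_option maxHeartbeats 1000000 in
theorem max_sin_cos_lower_bound (c₂ c₁ : ℝ)
    (hc₂ : c₂ = ((78 * Real.sqrt 3 + 54 * Real.sqrt 11) ^ ((1 : ℝ) / 3) - Real.sqrt 3) / 9 -
      8 / (3 * (78 * Real.sqrt 3 + 54 * Real.sqrt 11) ^ ((1 : ℝ) / 3)))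
    (hc₁ : c₁ = c₂ / Real.sqrt (c₂ ^ 2 + 1)) :
    ∀ z : ℝ, c₁ ≤ max |Real.sin z| (3 ^ (-(3 : ℝ) / 2) * |Real.cos (3 * z)|) := by
  have h3nn : (0:ℝ) ≤ 3 := by norm_num
  have h3sq : Real.sqrt 3 ^ 2 = 3 := Real.sq_sqrt h3nn
  have h11sq : Real.sqrt 11 ^ 2 = 11 := Real.sq_sqrt (by norm_num)
  have h3pos : (0:ℝ) < Real.sqrt 3 := Real.sqrt_pos.mpr (by norm_num)
  have h11pos : (0:ℝ) < Real.sqrt 11 := Real.sqrt_pos.mpr (by norm_num)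
  set a : ℝ := (78 * Real.sqrt 3 + 54 * Real.sqrt 11) ^ ((1 : ℝ) / 3) with ha
  have hbpos : (0:ℝ) < 78 * Real.sqrt 3 + 54 * Real.sqrt 11 := by positivity
  have hapos : (0:ℝ) < a := Real.rpow_pos_of_pos hbpos _
  have ha3 : a ^ 3 = 78 * Real.sqrt 3 + 54 * Real.sqrt 11 := by
    rw [ha, ← Real.rpow_natCast (_ ^ ((1:ℝ)/3)) 3, ← Real.rpow_mul hbpos.le]
    norm_num
  -- c₂ satisfies the cubic
  have cubic : 3 * Real.sqrt 3 * c₂ ^ 3 + 3 * c₂ ^ 2 + 3 * Real.sqrt 3 * c₂ = 1 := by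
    have hane : a ≠ 0 := ne_of_gt hapos
    rw [hc₂]
    field_simp
    linear_combination ((27)*a^3*Real.sqrt 3^1 + (-6318) + (1458)*Real.sqrt 3^1*Real.sqrt 11^1) * ha3 + ((-81)*a^5 + (81)*a^4*Real.sqrt 3^1 + (3969)*a^3 + (-27)*a^3*Real.sqrt 3^2 + (-1944)*a^2*Real.sqrt 3^1 + (-46656)*a^1 + (113724)*Real.sqrt 11^1) * h3sq + ((78732)*Real.sqrt 3^1) * h11sq
  -- positivity and size of c₂
  have hc2pos : 0 < c₂ := aux_pos _ _ aux_sqrt3 cubic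
  have hc2sq : 3 * c₂ ^ 2 < 1 := aux_small _ _ h3pos hc2pos cubic
  -- facts about c₁
  have hspos : (0:ℝ) < Real.sqrt (c₂ ^ 2 + 1) := Real.sqrt_pos.mpr (by positivity)
  have hssq : Real.sqrt (c₂ ^ 2 + 1) ^ 2 = c₂ ^ 2 + 1 := Real.sq_sqrt (by positivity)
  have hc1pos : 0 < c₁ := by rw [hc₁]; positivity
  have hc1sq : c₁ ^ 2 * (c₂ ^ 2 + 1) = c₂ ^ 2 := by
    rw [hc₁, div_pow, hssq, div_mul_cancel₀]
    positivity
  have hc1half : c₁ ≤ 1 / 2 := by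
    have h4 := aux_half c₂ (c₁ ^ 2) hc2sq hc1sq
    refine aux_of_sq c₁ (1/2) hc1pos.le (by norm_num) ?_
    nlinarith [h4]
  -- key identity : 27 c₁² + c₁²(3-4c₁²)² = 1
  have h13 : 3 * Real.sqrt 3 * c₂ * (1 + c₂ ^ 2) = 1 - 3 * c₂ ^ 2 := by linear_combination cubic
  have h27 : 27 * c₂ ^ 2 * (1 + c₂ ^ 2) ^ 2 = (1 - 3 * c₂ ^ 2) ^ 2 := by
    have hsq13 : (3 * Real.sqrt 3 * c₂ * (1 + c₂ ^ 2)) ^ 2 = (1 - 3 * c₂ ^ 2) ^ 2 := by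
      rw [h13]
    linear_combination hsq13 - 9 * c₂ ^ 2 * (1 + c₂ ^ 2) ^ 2 * h3sq
  have key : 27 * c₁ ^ 2 + c₁ ^ 2 * (3 - 4 * c₁ ^ 2) ^ 2 = 1 := aux_key c₂ (c₁ ^ 2) h27 hc1sq
  -- main argument
  intro z
  rcases le_or_gt c₁ |Real.sin z| with h | h
  · exact le_max_of_le_left h
  · refine le_max_of_le_right ?_
    set s : ℝ := |Real.sin z| with hs
    have hs0 : 0 ≤ s := abs_nonneg _
    have h2 : s ^ 2 = Real.sin z ^ 2 := sq_abs _
    have hsin3 : Real.sin (3 * z) = 3 * Real.sin z - 4 * Real.sin z ^ 3 := Real.sin_three_mul z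
    have hsin3sq : Real.sin (3 * z) ^ 2 = s ^ 2 * (3 - 4 * s ^ 2) ^ 2 := by
      rw [hsin3]
      linear_combination (-(9 - 24 * (s ^ 2 + Real.sin z ^ 2) +
        16 * (s ^ 4 + s ^ 2 * Real.sin z ^ 2 + Real.sin z ^ 4))) * h2
    have hcos2 : Real.cos (3 * z) ^ 2 = 1 - s ^ 2 * (3 - 4 * s ^ 2) ^ 2 := by
      have hpy := Real.sin_sq_add_cos_sq (3 * z)
      linarith only [hpy, hsin3sq]
    have hsq' : s ^ 2 * (3 - 4 * s ^ 2) ^ 2 ≤ c₁ ^ 2 * (3 - 4 * c₁ ^ 2) ^ 2 :=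
      aux_mono s c₁ hs0 h.le hc1pos hc1half
    have hineq : 27 * c₁ ^ 2 ≤ Real.cos (3 * z) ^ 2 := by
      rw [hcos2]
      linarith only [key, hsq']
    have habs : (0:ℝ) ≤ (3:ℝ) ^ (-(3 : ℝ) / 2) * |Real.cos (3 * z)| := by positivity
    refine aux_of_sq c₁ _ hc1pos.le habs ?_
    rw [mul_pow, aux_pow, sq_abs]
    linarith only [hineq]
end

section
/- Suppose ξ > 0 satisfies ξ < ξ₀ := (c₁/(2ζ(3/2)))^{2/3}. Then for every ℓ ≥ 1, sup_{p∈ℕ, p≥1} |φ_p(ℓ)| ≥ c₀ := (c₁ − 2ζ(3/2)ξ^{3/2})/(πξ) > 0. -/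
open Real

set_option maxHeartbeats 1000000

private lemma aux_cubic (c₂ : ℝ)
    (hc₂ : c₂ = ((78 * Real.sqrt 3 + 54 * Real.sqrt 11) ^ ((1 : ℝ) / 3) - Real.sqrt 3) / 9 -
      8 / (3 * (78 * Real.sqrt 3 + 54 * Real.sqrt 11) ^ ((1 : ℝ) / 3))) :
    3 * Real.sqrt 3 * c₂ ^ 3 + 3 * c₂ ^ 2 + 3 * Real.sqrt 3 * c₂ = 1 := by
  have hs : Real.sqrt 3 ^ 2 = 3 := Real.sq_sqrt (by norm_num)
  have hv : Real.sqrt 11 ^ 2 = 11 := Real.sq_sqrt (by norm_num)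
  have hspos : 0 < Real.sqrt 3 := Real.sqrt_pos.2 (by norm_num)
  have hvpos : 0 < Real.sqrt 11 := Real.sqrt_pos.2 (by norm_num)
  set s : ℝ := Real.sqrt 3 with hsdef
  set v : ℝ := Real.sqrt 11 with hvdef
  have hApos : (0:ℝ) < 78 * s + 54 * v := by positivity
  set T : ℝ := (78 * s + 54 * v) ^ ((1 : ℝ) / 3) with hTdef
  have hTpos : 0 < T := Real.rpow_pos_of_pos hApos _
  have hT3 : T ^ (3:ℕ) = 78 * s + 54 * v := by
    rw [hTdef, ← Real.rpow_natCast ((78 * s + 54 * v) ^ ((1:ℝ)/3)) 3, ← Real.rpow_mul hApos.le]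
    norm_num
  have hc : c₂ = (T ^ 2 - s * T - 24) / (9 * T) := by
    rw [hc₂]; field_simp; ring
  set P : ℝ := T ^ 2 - s * T - 24 with hPdef
  have key : 3*s*P^3 + 27*T*P^2 + 243*s*T^2*P - 729*T^3 = 0 := by
    rw [hPdef]
    linear_combination (-2025 + 162*s*v + 450*s^2 - 3*s^4 - 27*T*s + 9*T*s^3 + 27*T^2
        - 9*T^2*s^2 + 3*T^3*s) * hT3
      + (36450*v + 34398*s - 162*s^2*v - 234*s^3 - 5184*T + 486*T*s*v + 702*T*s^2
        - 486*T^2*v - 918*T^2*s) * hs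
      + (8748*s) * hv
  have hT0 : T ≠ 0 := ne_of_gt hTpos
  rw [hc]
  field_simp
  linear_combination key

private lemma aux_trig (c₂ c₁ : ℝ)
    (cubic : 3 * Real.sqrt 3 * c₂ ^ 3 + 3 * c₂ ^ 2 + 3 * Real.sqrt 3 * c₂ = 1)
    (hc₂pos : 0 < c₂) (hc₂sq : 3 * c₂ ^ 2 < 1)
    (hc₁ : c₁ = c₂ / Real.sqrt (c₂ ^ 2 + 1)) :
    0 < c₁ ∧ ∀ y : ℝ, |Real.sin y| < c₁ →
      3 * Real.sqrt 3 * c₁ ≤ |Real.cos (3 * y)| := by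
  have hs : Real.sqrt 3 ^ 2 = 3 := Real.sq_sqrt (by norm_num)
  have hspos : 0 < Real.sqrt 3 := Real.sqrt_pos.2 (by norm_num)
  set s : ℝ := Real.sqrt 3 with hsdef
  have hwpos : 0 < Real.sqrt (c₂ ^ 2 + 1) := Real.sqrt_pos.2 (by positivity)
  set w : ℝ := Real.sqrt (c₂ ^ 2 + 1) with hwdef
  have hw2 : w ^ 2 = c₂ ^ 2 + 1 := Real.sq_sqrt (by positivity)
  have hc₁pos : 0 < c₁ := by rw [hc₁]; positivity
  have hc₁w : c₁ * w = c₂ := by rw [hc₁]; field_simp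
  have hc₁sq : c₁ ^ 2 * w ^ 2 = c₂ ^ 2 := by nlinarith [hc₁w]
  have hkey2 : 1 - 4 * c₁ ^ 2 = 3 * s * c₂ := by
    have h : (1 - 4 * c₁ ^ 2) * w ^ 2 = (3 * s * c₂) * w ^ 2 := by
      rw [hw2]; nlinarith [hc₁sq, hw2]
    exact mul_right_cancel₀ (by positivity) h
  have hc₁sq4 : 4 * c₁ ^ 2 < 1 := by nlinarith [mul_pos (mul_pos hspos hc₂pos) hc₂pos]
  refine ⟨hc₁pos, fun y hsy => ?_⟩
  have hsy2 : Real.sin y ^ 2 < c₁ ^ 2 := by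
    nlinarith [abs_nonneg (Real.sin y), sq_abs (Real.sin y)]
  have hpos2 : 0 < 1 - 4 * Real.sin y ^ 2 := by nlinarith
  have ceq : Real.cos (3 * y) = Real.cos y * (1 - 4 * Real.sin y ^ 2) := by
    rw [Real.cos_three_mul]
    linear_combination 4 * Real.cos y * Real.sin_sq_add_cos_sq y
  have habs : |Real.cos (3 * y)| = |Real.cos y| * (1 - 4 * Real.sin y ^ 2) := by
    rw [ceq, abs_mul, abs_of_pos hpos2]
  have hA : 1 ≤ |Real.cos y| * w := by
    have h1 : (1:ℝ) ≤ (|Real.cos y| * w) ^ 2 := by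
      have : Real.cos y ^ 2 ≥ 1 - c₁ ^ 2 := by
        nlinarith [Real.sin_sq_add_cos_sq y]
      nlinarith [sq_abs (Real.cos y), hc₁sq, hw2]
    nlinarith [mul_nonneg (abs_nonneg (Real.cos y)) hwpos.le]
  have h2 : 3 * s * c₂ < 1 - 4 * Real.sin y ^ 2 := by rw [← hkey2]; nlinarith
  have h3 : 1 - 4 * Real.sin y ^ 2 ≤ |Real.cos y| * (1 - 4 * Real.sin y ^ 2) * w := by
    calc 1 - 4 * Real.sin y ^ 2 = 1 * (1 - 4 * Real.sin y ^ 2) := by ring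
    _ ≤ (|Real.cos y| * w) * (1 - 4 * Real.sin y ^ 2) :=
        mul_le_mul_of_nonneg_right hA hpos2.le
    _ = |Real.cos y| * (1 - 4 * Real.sin y ^ 2) * w := by ring
  have h4 : 3 * s * c₁ * w < |Real.cos y| * (1 - 4 * Real.sin y ^ 2) * w := by
    calc 3 * s * c₁ * w = 3 * s * c₂ := by linear_combination 3 * s * hc₁w
    _ < 1 - 4 * Real.sin y ^ 2 := h2
    _ ≤ _ := h3
  rw [habs]
  exact ((mul_lt_mul_iff_left₀ hwpos).1 h4).le

private lemma aux_tail (ξ ζ32 : ℝ) (hξ : 0 < ξ)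
    (hζ : ζ32 = ∑' n : ℕ, 1 / ((n : ℝ) + 1) ^ ((3 : ℝ) / 2))
    (p : ℕ) (hp : 1 ≤ p) (L : ℝ) :
    |(∑' k : ℤ, Real.sin (2 * Real.pi * Real.sqrt L *
            Real.sqrt ((k : ℝ) ^ 2 / ξ ^ 2 + (p : ℝ) ^ 2) - Real.pi / 4) /
          ((k : ℝ) ^ 2 / ξ ^ 2 + (p : ℝ) ^ 2) ^ ((3 : ℝ) / 4)) -
      Real.sin (2 * Real.pi * Real.sqrt L * (p : ℝ) - Real.pi / 4) /
        ((p : ℝ) ^ 2) ^ ((3 : ℝ) / 4)| ≤ 2 * ζ32 * ξ ^ ((3 : ℝ) / 2) := by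
  have hppos : (0:ℝ) < (p:ℝ) := by exact_mod_cast Nat.pos_of_ne_zero (by omega)
  set f : ℤ → ℝ := fun k => Real.sin (2 * Real.pi * Real.sqrt L *
      Real.sqrt ((k : ℝ) ^ 2 / ξ ^ 2 + (p : ℝ) ^ 2) - Real.pi / 4) /
      ((k : ℝ) ^ 2 / ξ ^ 2 + (p : ℝ) ^ 2) ^ ((3 : ℝ) / 4) with hfdef
  have hbase : ∀ k : ℤ, (0:ℝ) < (k : ℝ) ^ 2 / ξ ^ 2 + (p : ℝ) ^ 2 := fun k => by positivity
  have hg : ∀ k : ℤ, (0:ℝ) < ((k : ℝ) ^ 2 / ξ ^ 2 + (p : ℝ) ^ 2) ^ ((3 : ℝ) / 4) :=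
    fun k => Real.rpow_pos_of_pos (hbase k) _
  have habsf : ∀ k : ℤ, |f k| ≤ 1 / ((k : ℝ) ^ 2 / ξ ^ 2 + (p : ℝ) ^ 2) ^ ((3 : ℝ) / 4) := by
    intro k
    rw [hfdef, abs_div, abs_of_pos (hg k)]
    gcongr
    exact Real.abs_sin_le_one _
  have hMk : ∀ k : ℤ, k ≠ 0 → 1 / ((k : ℝ) ^ 2 / ξ ^ 2 + (p : ℝ) ^ 2) ^ ((3 : ℝ) / 4) ≤
      ξ ^ ((3 : ℝ) / 2) * (1 / |(k : ℝ)| ^ ((3 : ℝ) / 2)) := by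
    intro k hk
    have hkabs : (0:ℝ) < |(k : ℝ)| := abs_pos.2 (Int.cast_ne_zero.2 hk)
    have e1 : ((k : ℝ) ^ 2 / ξ ^ 2) ^ ((3 : ℝ) / 4) =
        |(k : ℝ)| ^ ((3 : ℝ) / 2) / ξ ^ ((3 : ℝ) / 2) := by
      rw [Real.div_rpow (by positivity) (by positivity), ← sq_abs (k : ℝ),
        ← Real.rpow_natCast |(k : ℝ)| 2, ← Real.rpow_natCast ξ 2,
        ← Real.rpow_mul (abs_nonneg _), ← Real.rpow_mul hξ.le]
      norm_num
    have h2 : ((k : ℝ) ^ 2 / ξ ^ 2) ^ ((3 : ℝ) / 4) ≤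
        ((k : ℝ) ^ 2 / ξ ^ 2 + (p : ℝ) ^ 2) ^ ((3 : ℝ) / 4) :=
      Real.rpow_le_rpow (by positivity) (by nlinarith [sq_nonneg (p:ℝ)]) (by norm_num)
    have h3 : |(k : ℝ)| ^ ((3 : ℝ) / 2) / ξ ^ ((3 : ℝ) / 2) ≤
        ((k : ℝ) ^ 2 / ξ ^ 2 + (p : ℝ) ^ 2) ^ ((3 : ℝ) / 4) := e1 ▸ h2
    have h4 := one_div_le_one_div_of_le (by positivity) h3
    calc 1 / ((k : ℝ) ^ 2 / ξ ^ 2 + (p : ℝ) ^ 2) ^ ((3 : ℝ) / 4)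
        ≤ 1 / (|(k : ℝ)| ^ ((3 : ℝ) / 2) / ξ ^ ((3 : ℝ) / 2)) := h4
      _ = ξ ^ ((3 : ℝ) / 2) * (1 / |(k : ℝ)| ^ ((3 : ℝ) / 2)) := by
          rw [one_div_div]; ring
  set M : ℤ → ℝ := fun k => if k = 0 then 0 else ξ ^ ((3 : ℝ) / 2) * (1 / |(k : ℝ)| ^ ((3 : ℝ) / 2))
    with hMdef
  have hMnn : ∀ k, 0 ≤ M k := by
    intro k; rw [hMdef]; dsimp only; split
    · exact le_refl 0
    · positivity
  have hMbase : Summable (fun k : ℤ => ξ ^ ((3 : ℝ) / 2) * (1 / |(k : ℝ)| ^ ((3 : ℝ) / 2))) := by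
    have h := (Real.summable_one_div_int_add_rpow 0 ((3:ℝ)/2)).2 (by norm_num)
    simpa using h.mul_left (ξ ^ ((3 : ℝ) / 2))
  have hMsum : Summable M := by
    refine Summable.of_nonneg_of_le hMnn (fun k => ?_) hMbase
    rw [hMdef]; dsimp only; split
    · positivity
    · exact le_refl _
  have hinj2 : Function.Injective (fun n : ℕ => -((n : ℤ) + 1)) := by
    intro a b h; simpa using h
  have h1 : Summable (fun n : ℕ => M n) := hMsum.comp_injective (fun a b h => by exact_mod_cast h)
  have h2 : Summable (fun n : ℕ => M (-((n:ℤ) + 1))) := hMsum.comp_injective hinj2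
  have eneg : ∀ n : ℕ, M (-((n:ℤ) + 1)) = ξ ^ ((3 : ℝ) / 2) * (1 / ((n:ℝ) + 1) ^ ((3 : ℝ) / 2)) := by
    intro n
    rw [hMdef]; dsimp only
    rw [if_neg (by omega)]
    congr 3
    push_cast
    rw [abs_neg, abs_of_nonneg (by positivity)]
  have epos : ∀ n : ℕ, M ((n:ℤ) + 1) = ξ ^ ((3 : ℝ) / 2) * (1 / ((n:ℝ) + 1) ^ ((3 : ℝ) / 2)) := by
    intro n
    rw [hMdef]; dsimp only
    rw [if_neg (by omega)]
    congr 3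
    push_cast
    rw [abs_of_nonneg (by positivity)]
  have hMtsum : ∑' k : ℤ, M k = 2 * ζ32 * ξ ^ ((3 : ℝ) / 2) := by
    rw [tsum_of_nat_of_neg_add_one h1 h2]
    have hA : ∑' n : ℕ, M ((n:ℕ) : ℤ) = ξ ^ ((3 : ℝ) / 2) * ζ32 := by
      rw [h1.tsum_eq_zero_add]
      have h0 : M ((0:ℕ) : ℤ) = 0 := by rw [hMdef]; simp
      rw [h0, zero_add]
      have : ∀ n : ℕ, M (((n+1:ℕ) : ℤ)) = ξ ^ ((3 : ℝ) / 2) * (1 / ((n:ℝ) + 1) ^ ((3 : ℝ) / 2)) := by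
        intro n; rw [show ((n+1:ℕ) : ℤ) = (n:ℤ) + 1 by push_cast; ring]; exact epos n
      rw [tsum_congr this, tsum_mul_left, hζ]
    have hB : ∑' n : ℕ, M (-((n:ℤ) + 1)) = ξ ^ ((3 : ℝ) / 2) * ζ32 := by
      rw [tsum_congr eneg, tsum_mul_left, hζ]
    rw [hA, hB]; ring
  have hcomp : ∀ k : ℤ, k ≠ 0 → |f k| ≤ M k := by
    intro k hk
    rw [hMdef]; dsimp only; rw [if_neg hk]
    exact (habsf k).trans (hMk k hk)
  have hsingle : Summable (fun k : ℤ => if k = 0 then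
      1 / ((k : ℝ) ^ 2 / ξ ^ 2 + (p : ℝ) ^ 2) ^ ((3 : ℝ) / 4) else 0) := by
    apply summable_of_ne_finset_zero (s := {0})
    intro b hb
    rw [if_neg (by simpa using hb)]
  have habs_sum : Summable (fun k : ℤ => |f k|) := by
    refine Summable.of_nonneg_of_le (fun k => abs_nonneg _) (fun k => ?_) (hMsum.add hsingle)
    by_cases hk : k = 0
    · subst hk
      rw [if_pos rfl]
      have := habsf 0
      have h0 : M 0 = 0 := by rw [hMdef]; simp
      rw [h0, zero_add]
      exact this
    · simp only [if_neg hk]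
      rw [add_zero]
      exact hcomp k hk
  have hsf : Summable f := habs_sum.of_abs
  have hsplit := hsf.tsum_eq_add_tsum_ite 0
  have habs_ite : Summable (fun k : ℤ => |if k = 0 then 0 else f k|) := by
    refine Summable.of_nonneg_of_le (fun k => abs_nonneg _) (fun k => ?_) hMsum
    by_cases hk : k = 0
    · subst hk; rw [if_pos rfl, abs_zero]; exact hMnn 0
    · rw [if_neg hk]; exact hcomp k hk
  have htail : |∑' k : ℤ, (if k = 0 then 0 else f k)| ≤ 2 * ζ32 * ξ ^ ((3 : ℝ) / 2) := by
    calc |∑' k : ℤ, (if k = 0 then 0 else f k)|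
        ≤ ∑' k : ℤ, |if k = 0 then 0 else f k| := by
          have hnorm := norm_tsum_le_tsum_norm
            (f := fun k : ℤ => if k = 0 then 0 else f k)
            (by simpa [Real.norm_eq_abs] using habs_ite)
          simpa [Real.norm_eq_abs] using hnorm
      _ ≤ ∑' k : ℤ, M k := by
          refine habs_ite.tsum_le_tsum (fun k => ?_) hMsum
          by_cases hk : k = 0
          · subst hk; rw [if_pos rfl, abs_zero]; exact hMnn 0
          · rw [if_neg hk]; exact hcomp k hk
      _ = 2 * ζ32 * ξ ^ ((3 : ℝ) / 2) := hMtsum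
  have hf0 : f 0 = Real.sin (2 * Real.pi * Real.sqrt L * (p : ℝ) - Real.pi / 4) /
      ((p : ℝ) ^ 2) ^ ((3 : ℝ) / 4) := by
    rw [hfdef]; dsimp only
    norm_num [Real.sqrt_sq hppos.le]
  calc |(∑' k : ℤ, f k) - Real.sin (2 * Real.pi * Real.sqrt L * (p : ℝ) - Real.pi / 4) /
        ((p : ℝ) ^ 2) ^ ((3 : ℝ) / 4)|
      = |∑' k : ℤ, (if k = 0 then 0 else f k)| := by
        rw [hsplit, ← hf0, add_sub_cancel_left]
    _ ≤ 2 * ζ32 * ξ ^ ((3 : ℝ) / 2) := htail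

theorem sup_phi_positive_lower_bound (c₂ c₁ ζ32 ξ₀ : ℝ)
    (hc₂ : c₂ = ((78 * Real.sqrt 3 + 54 * Real.sqrt 11) ^ ((1 : ℝ) / 3) - Real.sqrt 3) / 9 -
      8 / (3 * (78 * Real.sqrt 3 + 54 * Real.sqrt 11) ^ ((1 : ℝ) / 3)))
    (hc₁ : c₁ = c₂ / Real.sqrt (c₂ ^ 2 + 1))
    (hζ : ζ32 = ∑' n : ℕ, 1 / ((n : ℝ) + 1) ^ ((3 : ℝ) / 2))
    (hξ₀ : ξ₀ = (c₁ / (2 * ζ32)) ^ ((2 : ℝ) / 3))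
    (ξ : ℝ) (hξ : 0 < ξ) (hξlt : ξ < ξ₀)
    (φ : ℕ → ℝ → ℝ)
    (hφ : ∀ p : ℕ, ∀ ℓ : ℝ, φ p ℓ = (1 / (Real.pi * ξ)) *
      ∑' k : ℤ,
        Real.sin (2 * Real.pi * Real.sqrt ℓ *
            Real.sqrt ((k : ℝ) ^ 2 / ξ ^ 2 + (p : ℝ) ^ 2) - Real.pi / 4) /
          ((k : ℝ) ^ 2 / ξ ^ 2 + (p : ℝ) ^ 2) ^ ((3 : ℝ) / 4))
    (c₀ : ℝ) (hc₀ : c₀ = (c₁ - 2 * ζ32 * ξ ^ ((3 : ℝ) / 2)) / (Real.pi * ξ)) :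
    0 < c₀ ∧ ∀ ℓ : ℝ, 1 ≤ ℓ → c₀ ≤ ⨆ p : {p : ℕ // 1 ≤ p}, |φ p ℓ| := by
  have hs : Real.sqrt 3 ^ 2 = 3 := Real.sq_sqrt (by norm_num)
  have hspos : 0 < Real.sqrt 3 := Real.sqrt_pos.2 (by norm_num)
  have hslb : 1.7 ≤ Real.sqrt 3 := by nlinarith
  have cubic := aux_cubic c₂ hc₂
  have hc₂pos : 0 < c₂ := by
    by_contra h
    push_neg at h
    have h1 : 0 ≤ Real.sqrt 3 * (-c₂) * (c₂ + 2/5)^2 :=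
      mul_nonneg (mul_nonneg hspos.le (neg_nonneg.2 h)) (sq_nonneg _)
    nlinarith [sq_nonneg c₂, mul_nonneg (neg_nonneg.2 h) (sq_nonneg c₂)]
  have hc₂sq : 3 * c₂ ^ 2 < 1 := by
    nlinarith [pow_pos hc₂pos 3, mul_pos hspos hc₂pos]
  obtain ⟨hc₁pos, htrig⟩ := aux_trig c₂ c₁ cubic hc₂pos hc₂sq hc₁
  -- ζ32 facts
  have hζsum : Summable (fun n : ℕ => 1 / ((n : ℝ) + 1) ^ ((3 : ℝ) / 2)) := by
    have h := (Real.summable_one_div_nat_rpow (p := (3:ℝ)/2)).2 (by norm_num)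
    have h2 := (summable_nat_add_iff (f := fun n : ℕ => 1 / (n : ℝ) ^ ((3 : ℝ) / 2)) 1).2 h
    refine h2.congr fun n => ?_
    push_cast
    ring_nf
  have hζpos : 0 < ζ32 := by
    rw [hζ]
    exact hζsum.tsum_pos (fun i => by positivity) 0 (by norm_num)
  have hπξ : (0:ℝ) < Real.pi * ξ := mul_pos Real.pi_pos hξ
  -- c₁ dominates the tail
  have hBlt : 2 * ζ32 * ξ ^ ((3:ℝ)/2) < c₁ := by
    have hXpos : 0 < c₁ / (2 * ζ32) := by positivity
    have hξ₀pow : ξ₀ ^ ((3:ℝ)/2) = c₁ / (2 * ζ32) := by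
      rw [hξ₀, ← Real.rpow_mul hXpos.le]
      norm_num
    have hlt : ξ ^ ((3:ℝ)/2) < c₁ / (2 * ζ32) := by
      rw [← hξ₀pow]
      exact Real.rpow_lt_rpow hξ.le hξlt (by norm_num)
    rw [div_eq_mul_inv] at hlt
    have h2 : (0:ℝ) < 2 * ζ32 := by positivity
    calc 2 * ζ32 * ξ ^ ((3:ℝ)/2) < 2 * ζ32 * (c₁ * (2*ζ32)⁻¹) :=
          (mul_lt_mul_iff_right₀ h2).2 hlt
      _ = c₁ := by field_simp
  set B : ℝ := 2 * ζ32 * ξ ^ ((3:ℝ)/2) with hBdef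
  have hBpos : 0 < B := by rw [hBdef]; positivity
  have hc₀pos : 0 < c₀ := by
    rw [hc₀]
    exact div_pos (by linarith) hπξ
  refine ⟨hc₀pos, fun ℓ hℓ => ?_⟩
  -- bounds on |φ p ℓ| for each p ≥ 1
  have hlow : ∀ p : ℕ, 1 ≤ p →
      (|Real.sin (2 * Real.pi * Real.sqrt ℓ * (p : ℝ) - Real.pi / 4)| /
          ((p : ℝ) ^ 2) ^ ((3 : ℝ) / 4) - B) / (Real.pi * ξ) ≤ |φ p ℓ| ∧
      |φ p ℓ| ≤ (1 + B) / (Real.pi * ξ) := by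
    intro p hp
    have hppos : (0:ℝ) < (p:ℝ) := by exact_mod_cast Nat.pos_of_ne_zero (by omega)
    have hp1 : (1:ℝ) ≤ (p:ℝ) := by exact_mod_cast hp
    have htb := aux_tail ξ ζ32 hξ hζ p hp ℓ
    set S : ℝ := ∑' k : ℤ,
        Real.sin (2 * Real.pi * Real.sqrt ℓ *
            Real.sqrt ((k : ℝ) ^ 2 / ξ ^ 2 + (p : ℝ) ^ 2) - Real.pi / 4) /
          ((k : ℝ) ^ 2 / ξ ^ 2 + (p : ℝ) ^ 2) ^ ((3 : ℝ) / 4) with hSdef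
    set a : ℝ := Real.sin (2 * Real.pi * Real.sqrt ℓ * (p : ℝ) - Real.pi / 4) /
        ((p : ℝ) ^ 2) ^ ((3 : ℝ) / 4) with hadef
    have hφeq : φ p ℓ = (1 / (Real.pi * ξ)) * S := hφ p ℓ
    have hden : (1:ℝ) ≤ ((p : ℝ) ^ 2) ^ ((3 : ℝ) / 4) := by
      have := Real.rpow_le_rpow (by norm_num : (0:ℝ) ≤ 1)
        (by nlinarith : (1:ℝ) ≤ (p:ℝ)^2) (by norm_num : (0:ℝ) ≤ 3/4)
      simpa [Real.one_rpow] using this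
    have hdenpos : (0:ℝ) < ((p : ℝ) ^ 2) ^ ((3 : ℝ) / 4) := by positivity
    have haabs : |a| = |Real.sin (2 * Real.pi * Real.sqrt ℓ * (p : ℝ) - Real.pi / 4)| /
        ((p : ℝ) ^ 2) ^ ((3 : ℝ) / 4) := by
      rw [hadef, abs_div, abs_of_pos hdenpos]
    have ha1 : |a| ≤ 1 := by
      rw [haabs]
      calc |Real.sin (2 * Real.pi * Real.sqrt ℓ * (p : ℝ) - Real.pi / 4)| /
            ((p : ℝ) ^ 2) ^ ((3 : ℝ) / 4)
          ≤ 1 / ((p : ℝ) ^ 2) ^ ((3 : ℝ) / 4) := by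
            gcongr; exact Real.abs_sin_le_one _
        _ ≤ 1 / 1 := by gcongr
        _ = 1 := by norm_num
    have hSlow : |a| - B ≤ |S| := by
      have := abs_sub_abs_le_abs_sub a S
      rw [abs_sub_comm a S] at this
      linarith
    have hSup : |S| ≤ |a| + B := by
      have h := abs_sub_abs_le_abs_sub S a
      linarith
    have hφabs : |φ p ℓ| = |S| / (Real.pi * ξ) := by
      rw [hφeq, abs_mul, abs_of_pos (by positivity : (0:ℝ) < 1 / (Real.pi * ξ))]
      rw [div_eq_mul_inv, one_mul, div_eq_mul_inv, mul_comm]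
    constructor
    · rw [hφabs, ← haabs]
      gcongr
    · rw [hφabs]
      gcongr
      linarith
  have hbdd : BddAbove (Set.range fun p : {p : ℕ // 1 ≤ p} => |φ p ℓ|) := by
    refine ⟨(1 + B) / (Real.pi * ξ), ?_⟩
    rintro x ⟨p, rfl⟩
    exact (hlow p p.2).2
  -- case analysis
  set y : ℝ := 2 * Real.pi * Real.sqrt ℓ - Real.pi / 4 with hydef
  by_cases hcase : c₁ ≤ |Real.sin y|
  · -- use p = 1
    have h1 := (hlow 1 le_rfl).1
    have e1 : |Real.sin (2 * Real.pi * Real.sqrt ℓ * ((1:ℕ) : ℝ) - Real.pi / 4)| /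
        (((1:ℕ) : ℝ) ^ 2) ^ ((3 : ℝ) / 4) = |Real.sin y| := by
      norm_num [hydef]
    rw [e1] at h1
    refine le_trans ?_ (le_ciSup_of_le hbdd ⟨1, le_rfl⟩ h1)
    rw [hc₀]
    gcongr
  · push_neg at hcase
    have h3 := htrig y hcase
    have h9 : (((3:ℕ) : ℝ) ^ 2) ^ ((3 : ℝ) / 4) = 3 * Real.sqrt 3 := by
      have e1 : (((3:ℕ) : ℝ) ^ 2) ^ ((3 : ℝ) / 4) = (3:ℝ) ^ ((3:ℝ)/2) := by
        rw [show (((3:ℕ) : ℝ) ^ 2) = (3:ℝ)^(2:ℕ) by norm_num,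
          ← Real.rpow_natCast (3:ℝ) 2, ← Real.rpow_mul (by norm_num : (0:ℝ) ≤ 3)]
        norm_num
      rw [e1, show ((3:ℝ)/2) = (1:ℝ) + 1/2 by norm_num, Real.rpow_add (by norm_num),
        Real.rpow_one, Real.sqrt_eq_rpow]
    have ecos : |Real.sin (2 * Real.pi * Real.sqrt ℓ * ((3:ℕ) : ℝ) - Real.pi / 4)| =
        |Real.cos (3 * y)| := by
      rw [show 2 * Real.pi * Real.sqrt ℓ * ((3:ℕ) : ℝ) - Real.pi / 4
          = 3 * y + Real.pi / 2 by rw [hydef]; push_cast; ring,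
        Real.sin_add_pi_div_two]
    have hl3 := (hlow 3 (by norm_num)).1
    have hfrac : c₁ ≤ |Real.sin (2 * Real.pi * Real.sqrt ℓ * ((3:ℕ) : ℝ) - Real.pi / 4)| /
        (((3:ℕ) : ℝ) ^ 2) ^ ((3 : ℝ) / 4) := by
      rw [h9, ecos, le_div_iff₀ (by positivity)]
      calc c₁ * (3 * Real.sqrt 3) = 3 * Real.sqrt 3 * c₁ := by ring
        _ ≤ |Real.cos (3 * y)| := h3
    refine le_trans ?_ (le_ciSup_of_le hbdd ⟨3, by norm_num⟩ hl3)
    rw [hc₀]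
    gcongr
end
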